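/- (Continuous-time framer-error dynamics and comparison bound.) Let A ∈ ℝ^{n×n}, C ∈ ℝ^{l×n}, L ∈ ℝ^{n×l}, set M := A − LC, M^↑ := M^d + (M^{nd})⁺ and M^↓ := (M^{nd})⁻. Let φ_d : ℝⁿ×ℝⁿ → ℝⁿ and ψ_d : ℝⁿ×ℝⁿ → ℝˡ be arbitrary maps, and let x̄, x̲ : [0,∞) → ℝⁿ be differentiable and satisfy d x̄_t/dt = M^↑ x̄_t − M^↓ x̲_t + v_t + φ_d(x̄_t, x̲_t) − L⁺ ψ_d(x̲_t, x̄_t) + L⁻ ψ_d(x̄_t, x̲_t) and d x̲_t/dt = M^↑ x̲_t − M^↓ x̄_t + v_t + φ_d(x̲_t, x̄_t) − L⁺ ψ_d(x̄_t, x̲_t) + L⁻ ψ_d(x̲_t, x̄_t), where v_t ∈ ℝⁿ is any common input. Let ε_t := x̄_t − x̲_t, Δφ_d(t) := φ_d(x̄_t,x̲_t) − φ_d(x̲_t,x̄_t) and Δψ_d(t) := ψ_d(x̄_t,x̲_t) − ψ_d(x̲_t,x̄_t). Then dε_t/dt = (M^d + |M^{nd}|) ε_t + Δφ_d(t) + |L|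 Δψ_d(t). If moreover ε_t ≥ 0 and Δφ_d(t) ≤ F̄_φ ε_t, Δψ_d(t) ≤ F̄_ψ ε_t for matrices F̄_φ ∈ ℝ^{n×n}, F̄_ψ ∈ ℝ^{l×n}, then dε_t/dt ≤ (A^m + (−LC)^m + F̄_φ + |L| F̄_ψ) ε_t componentwise. -/

import Mathlib

open Matrix

/-- Entrywise positive part `M⁺ = max(M,0)`. -/
noncomputable def entPos {p n : ℕ} (M : Matrix (Fin p) (Fin n) ℝ) : Matrix (Fin p) (Fin n) ℝ :=
  Matrix.of fun i j => max (M i j) 0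

/-- Entrywise negative part `M⁻ = M⁺ - M`. -/
noncomputable def entNeg {p n : ℕ} (M : Matrix (Fin p) (Fin n) ℝ) : Matrix (Fin p) (Fin n) ℝ :=
  entPos M - M

/-- Entrywise absolute value `|M| = M⁺ + M⁻`. -/
noncomputable def entAbs {p n : ℕ} (M : Matrix (Fin p) (Fin n) ℝ) : Matrix (Fin p) (Fin n) ℝ :=
  entPos M + entNeg M

/-- `M^d`: the diagonal matrix with the same diagonal as `M`. -/
def diagPart {n : ℕ} (M : Matrix (Fin n) (Fin n) ℝ) : Matrix (Fin n) (Fin n) ℝ :=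
  Matrix.diagonal fun i => M i i

/-- `M^{nd} = M - M^d`. -/
def offDiagPart {n : ℕ} (M : Matrix (Fin n) (Fin n) ℝ) : Matrix (Fin n) (Fin n) ℝ := M - diagPart M

/-- `M^m = M^d + |M^{nd}|`. -/
noncomputable def metzPart {n : ℕ} (M : Matrix (Fin n) (Fin n) ℝ) : Matrix (Fin n) (Fin n) ℝ :=
  diagPart M + entAbs (offDiagPart M)

/-- A square real matrix is Metzler if all off-diagonal entries are nonnegative. -/
def Metzler {n : ℕ} (M : Matrix (Fin n) (Fin n) ℝ) : Prop := ∀ i j, i ≠ j → 0 ≤ M i j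

/-- `gd` is a (discrete-time mixed-monotone) decomposition function of `g`. -/
def IsDecompositionFunction {n p : ℕ} (g : (Fin n → ℝ) → Fin p → ℝ)
    (gd : (Fin n → ℝ) → (Fin n → ℝ) → Fin p → ℝ) : Prop :=
  (∀ x, gd x x = g x) ∧
  (∀ x x' x₂, x ≤ x' → gd x x₂ ≤ gd x' x₂) ∧
  (∀ x x' x₁, x ≤ x' → gd x₁ x' ≤ gd x₁ x)


lemma entAbs_apply {p n : ℕ} (M : Matrix (Fin p) (Fin n) ℝ) (i : Fin p) (j : Fin n) :
    entAbs M i j = |M i j| := by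
  simp only [entAbs, entPos, entNeg, Matrix.add_apply, Matrix.sub_apply, Matrix.of_apply]
  rcases le_total (M i j) 0 with h | h
  · rw [abs_of_nonpos h, max_eq_right h]; ring
  · rw [abs_of_nonneg h, max_eq_left h]; ring

lemma entAbs_nonneg {p n : ℕ} (M : Matrix (Fin p) (Fin n) ℝ) (i : Fin p) (j : Fin n) :
    0 ≤ entAbs M i j := by rw [entAbs_apply]; exact abs_nonneg _

lemma mulVec_le_mulVec_of_le {p n : ℕ} (M N : Matrix (Fin p) (Fin n) ℝ) (x : Fin n → ℝ)
    (hx : 0 ≤ x) (h : ∀ i j, M i j ≤ N i j) : M.mulVec x ≤ N.mulVec x := by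
  intro i
  simp only [Matrix.mulVec, dotProduct]
  apply Finset.sum_le_sum
  intro j _
  exact mul_le_mul_of_nonneg_right (h i j) (hx j)

lemma mulVec_mono {p n : ℕ} (M : Matrix (Fin p) (Fin n) ℝ) (u w : Fin n → ℝ)
    (hM : ∀ i j, 0 ≤ M i j) (h : u ≤ w) : M.mulVec u ≤ M.mulVec w := by
  intro i
  simp only [Matrix.mulVec, dotProduct]
  apply Finset.sum_le_sum
  intro j _
  exact mul_le_mul_of_nonneg_left (h j) (hM i j)

/-- continuous-time framer-error dynamics and comparison bound. -/
theorem statement14 {n l : ℕ} (A : Matrix (Fin n) (Fin n) ℝ) (C : Matrix (Fin l) (Fin n) ℝ)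
    (L : Matrix (Fin n) (Fin l) ℝ)
    (M Mup Mdn : Matrix (Fin n) (Fin n) ℝ)
    (hM : M = A - L * C)
    (hMup : Mup = diagPart M + entPos (offDiagPart M))
    (hMdn : Mdn = entNeg (offDiagPart M))
    (φd : (Fin n → ℝ) → (Fin n → ℝ) → Fin n → ℝ)
    (ψd : (Fin n → ℝ) → (Fin n → ℝ) → Fin l → ℝ)
    (v : ℝ → Fin n → ℝ) (xu xl : ℝ → Fin n → ℝ)
    (hxu : ∀ t ≥ (0 : ℝ), HasDerivAt xu
      (Mup.mulVec (xu t) - Mdn.mulVec (xl t) + v t + φd (xu t) (xl t)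
        - (entPos L).mulVec (ψd (xl t) (xu t)) + (entNeg L).mulVec (ψd (xu t) (xl t))) t)
    (hxl : ∀ t ≥ (0 : ℝ), HasDerivAt xl
      (Mup.mulVec (xl t) - Mdn.mulVec (xu t) + v t + φd (xl t) (xu t)
        - (entPos L).mulVec (ψd (xu t) (xl t)) + (entNeg L).mulVec (ψd (xl t) (xu t))) t)
    (ε : ℝ → Fin n → ℝ) (hε : ∀ t, ε t = xu t - xl t)
    (Δφ : ℝ → Fin n → ℝ) (hΔφ : ∀ t, Δφ t = φd (xu t) (xl t) - φd (xl t) (xu t))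
    (Δψ : ℝ → Fin l → ℝ) (hΔψ : ∀ t, Δψ t = ψd (xu t) (xl t) - ψd (xl t) (xu t)) :
    -- error dynamics: dε/dt = (M^d + |M^{nd}|) ε + Δφ_d + |L| Δψ_d
    (∀ t ≥ (0 : ℝ), HasDerivAt ε
      ((diagPart M + entAbs (offDiagPart M)).mulVec (ε t) + Δφ t
        + (entAbs L).mulVec (Δψ t)) t) ∧
    -- comparison bound
    (∀ (Fφ : Matrix (Fin n) (Fin n) ℝ) (Fψ : Matrix (Fin l) (Fin n) ℝ),
      (∀ t ≥ (0 : ℝ), 0 ≤ ε t) →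
      (∀ t ≥ (0 : ℝ), Δφ t ≤ Fφ.mulVec (ε t)) →
      (∀ t ≥ (0 : ℝ), Δψ t ≤ Fψ.mulVec (ε t)) →
      ∀ t ≥ (0 : ℝ),
        (diagPart M + entAbs (offDiagPart M)).mulVec (ε t) + Δφ t
            + (entAbs L).mulVec (Δψ t)
          ≤ (metzPart A + metzPart (-(L * C)) + Fφ + (entAbs L) * Fψ).mulVec (ε t)) := by
  have heq : ε = fun t => xu t - xl t := funext hε
  subst heq
  constructor
  · intro t ht
    have h := (hxu t ht).sub (hxl t ht)
    show HasDerivAt (xu - xl) _ t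
    refine h.congr_deriv ?_
    simp only [hε, hΔφ t, hΔψ t, hMup, hMdn, entAbs, Matrix.add_mulVec,
      Matrix.mulVec_sub, Matrix.sub_mulVec]
    abel
  · intro Fφ Fψ hpos hφ hψ t ht
    set e := xu t - xl t with he
    have hpe : (0 : Fin n → ℝ) ≤ e := hpos t ht
    have h1 : (diagPart M + entAbs (offDiagPart M)).mulVec e
        ≤ (metzPart A + metzPart (-(L * C))).mulVec e := by
      apply mulVec_le_mulVec_of_le _ _ _ hpe
      intro i j
      simp only [Matrix.add_apply, metzPart, diagPart, offDiagPart, entAbs_apply,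
        Matrix.sub_apply, Matrix.neg_apply, hM, Matrix.diagonal_apply]
      by_cases hij : i = j
      · subst hij; simp
      · simp only [hij, if_false, zero_add, abs_neg]
        have h1 : |A i j - (L * C) i j| ≤ |A i j| + |(L * C) i j| := abs_sub _ _
        simp [hij, abs_neg]
        linarith
    have h2 : Δφ t ≤ Fφ.mulVec e := hφ t ht
    have h3 : (entAbs L).mulVec (Δψ t) ≤ ((entAbs L) * Fψ).mulVec e := by
      have := mulVec_mono (entAbs L) (Δψ t) (Fψ.mulVec e) (entAbs_nonneg L) (hψ t ht)
      rwa [Matrix.mulVec_mulVec] at this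
    calc (diagPart M + entAbs (offDiagPart M)).mulVec e + Δφ t + (entAbs L).mulVec (Δψ t)
        ≤ (metzPart A + metzPart (-(L * C))).mulVec e + Fφ.mulVec e
            + ((entAbs L) * Fψ).mulVec e := by
          exact add_le_add (add_le_add h1 h2) h3
      _ = (metzPart A + metzPart (-(L * C)) + Fφ + (entAbs L) * Fψ).mulVec e := by
          simp [Matrix.add_mulVec]
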